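/- Let Q > 0 be real. For t ∈ ℝ and real λ > 2√(Qe^t), let x₋(λ,t) = (λ − √(λ² − 4Qe^t))/2 and x₊(λ,t) = (λ + √(λ² − 4Qe^t))/2, and for an integer k ≥ 2 define the period integral ℐ_k(λ, t) = ∫_{x₋(λ,t)}^{x₊(λ,t)} (λ − x − Qe^t/x)^{k}/k! · dx/x. Then ℐ_k is twice continuously differentiable in (λ, t) on the region {λ > 2√(Qe^t)} and satisfies ∂²ℐ_k/∂t² = Qe^t · ∂²ℐ_k/∂λ². -/

import Mathlib

open intervalIntegral

open Real

noncomputable def yl (s : ℝ) : ℝ := (s - Real.sqrt (s^2 - 4)) / 2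
noncomputable def yr (s : ℝ) : ℝ := (s + Real.sqrt (s^2 - 4)) / 2
noncomputable def Hf (j : ℕ) (s : ℝ) : ℝ :=
  ∫ y in yl s..yr s, (s - y - y⁻¹) ^ j / ((j.factorial : ℝ) * y)

lemma dd_sq {s : ℝ} (hs : 2 < s) : (Real.sqrt (s^2-4))^2 = s^2 - 4 :=
  Real.sq_sqrt (by nlinarith)

lemma dd_pos {s : ℝ} (hs : 2 < s) : 0 < Real.sqrt (s^2-4) :=
  Real.sqrt_pos.2 (by nlinarith)

lemma dd_lt {s : ℝ} (hs : 2 < s) : Real.sqrt (s^2-4) < s := by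
  nlinarith [dd_sq hs, dd_pos hs]

lemma yl_pos {s : ℝ} (hs : 2 < s) : 0 < yl s := by
  have := dd_lt hs; unfold yl; linarith

lemma yl_lt_yr {s : ℝ} (hs : 2 < s) : yl s < yr s := by
  have := dd_pos hs; unfold yl yr; linarith

lemma yr_pos {s : ℝ} (hs : 2 < s) : 0 < yr s := lt_trans (yl_pos hs) (yl_lt_yr hs)

lemma yl_add_yr (s : ℝ) : yl s + yr s = s := by unfold yl yr; ring

lemma yl_mul_yr {s : ℝ} (hs : 2 < s) : yl s * yr s = 1 := by
  have h := dd_sq hs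
  unfold yl yr; nlinarith

/-- factorization of `w` -/
lemma w_factor {s y : ℝ} (hs : 2 < s) (hy : y ≠ 0) :
    s - y - y⁻¹ = -((y - yl s) * (y - yr s)) / y := by
  have h1 := yl_add_yr s
  have h2 := yl_mul_yr hs
  have : (y - yl s) * (y - yr s) = y^2 - s*y + 1 := by linear_combination (-y) * h1 + h2
  rw [this]
  field_simp
  ring

lemma w_yl {s : ℝ} (hs : 2 < s) : s - yl s - (yl s)⁻¹ = 0 := by
  rw [w_factor hs (ne_of_gt (yl_pos hs))]; simp

lemma w_yr {s : ℝ} (hs : 2 < s) : s - yr s - (yr s)⁻¹ = 0 := by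
  rw [w_factor hs (ne_of_gt (yr_pos hs))]; simp

lemma w_nonneg {s y : ℝ} (hs : 2 < s) (h1 : yl s ≤ y) (h2 : y ≤ yr s) :
    0 ≤ s - y - y⁻¹ := by
  have hy : 0 < y := lt_of_lt_of_le (yl_pos hs) h1
  rw [w_factor hs hy.ne']
  apply div_nonneg _ hy.le
  nlinarith

lemma w_nonpos_left {s y : ℝ} (hs : 2 < s) (hy : 0 < y) (h : y ≤ yl s) :
    s - y - y⁻¹ ≤ 0 := by
  have := yl_lt_yr hs
  rw [w_factor hs hy.ne']
  apply div_nonpos_of_nonpos_of_nonneg _ hy.le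
  nlinarith

lemma w_nonpos_right {s y : ℝ} (hs : 2 < s) (h : yr s ≤ y) :
    s - y - y⁻¹ ≤ 0 := by
  have h2 := yl_lt_yr hs
  have hy : 0 < y := lt_of_lt_of_le (yr_pos hs) h
  rw [w_factor hs hy.ne']
  apply div_nonpos_of_nonpos_of_nonneg _ hy.le
  nlinarith

lemma yl_continuous : Continuous yl := by
  unfold yl; fun_prop

lemma yr_continuous : Continuous yr := by
  unfold yr; fun_prop

-- derivative of positive-part power, exponent >= 2
lemma hasDerivAt_maxpow (m : ℕ) (r : ℝ) :
    HasDerivAt (fun x : ℝ => max x 0 ^ (m+2)) ((m+2) * max r 0 ^ (m+1)) r := by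
  rcases lt_trichotomy r 0 with h | h | h
  · have hev : (fun x : ℝ => max x 0 ^ (m+2)) =ᶠ[nhds r] (fun _ => 0) := by
      filter_upwards [eventually_lt_nhds h] with x hx
      simp [max_eq_right hx.le]
    rw [show ((m:ℝ)+2) * max r 0 ^ (m+1) = 0 by simp [max_eq_right h.le]]
    exact (hasDerivAt_const r (0:ℝ)).congr_of_eventuallyEq hev
  · subst h
    rw [show ((m:ℝ)+2) * max (0:ℝ) 0 ^ (m+1) = 0 by simp]
    rw [hasDerivAt_iff_isLittleO]
    simp only [smul_zero, sub_zero, max_self, zero_pow, Nat.add_eq_zero, OfNat.ofNat_ne_zero,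
      and_false, ne_eq, not_false_eq_true]
    calc (fun x' : ℝ => max x' 0 ^ (m+2))
        =O[nhds 0] (fun x : ℝ => x ^ (m+2)) := by
          apply Asymptotics.isBigO_of_le
          intro x
          simp only [sub_zero, norm_pow, Real.norm_eq_abs]
          refine pow_le_pow_left₀ (abs_nonneg _) ?_ _
          rcases le_or_gt x 0 with hx | hx
          · simp [max_eq_right hx]
          · simp [max_eq_left hx.le]
      _ =o[nhds 0] (fun x' : ℝ => x') := by
          simpa using (Asymptotics.isLittleO_pow_id (n := m+2) (by omega)).congr_left
            (fun x => rfl)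
  · have hev : (fun x : ℝ => max x 0 ^ (m+2)) =ᶠ[nhds r] (fun x => x ^ (m+2)) := by
      filter_upwards [eventually_gt_nhds h] with x hx
      simp [max_eq_left hx.le]
    rw [show ((m:ℝ)+2) * max r 0 ^ (m+1) = (m+2) * r ^ (m+1) by simp [max_eq_left h.le]]
    exact ((hasDerivAt_pow (m+2) r).congr_of_eventuallyEq hev).congr_deriv (by push_cast; ring)

lemma contOn_w_pow (s : ℝ) (j : ℕ) :
    ContinuousOn (fun y : ℝ => (s - y - y⁻¹) ^ j / ((j.factorial : ℝ) * y)) {y : ℝ | 0 < y} := by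
  apply ContinuousOn.div
  · apply ContinuousOn.pow
    apply ContinuousOn.sub (continuousOn_const.sub (continuousOn_id))
    exact continuousOn_inv₀.mono (fun y hy => ne_of_gt hy)
  · exact continuousOn_const.mul continuousOn_id
  · intro y hy
    exact mul_ne_zero (Nat.cast_ne_zero.2 j.factorial_ne_zero) (ne_of_gt hy)

lemma contOn_max_pow (s : ℝ) (j : ℕ) :
    ContinuousOn (fun y : ℝ => max (s - y - y⁻¹) 0 ^ j / ((j.factorial : ℝ) * y))
      {y : ℝ | 0 < y} := by
  apply ContinuousOn.div
  · apply ContinuousOn.pow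
    have h1 : ContinuousOn (fun y : ℝ => s - y - y⁻¹) {y : ℝ | 0 < y} :=
      ContinuousOn.sub (continuousOn_const.sub (continuousOn_id))
        (continuousOn_inv₀.mono (fun y hy => ne_of_gt hy))
    intro y hy
    exact ((h1 y hy).max continuousWithinAt_const)
  · exact continuousOn_const.mul continuousOn_id
  · intro y hy
    exact mul_ne_zero (Nat.cast_ne_zero.2 j.factorial_ne_zero) (ne_of_gt hy)

/-- closed form for `Hf 0` -/
lemma Hf_zero {s : ℝ} (hs : 2 < s) : Hf 0 s = Real.log (yr s) - Real.log (yl s) := by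
  have hyl := yl_pos hs
  have hylr := yl_lt_yr hs
  have huIcc : Set.uIcc (yl s) (yr s) = Set.Icc (yl s) (yr s) := Set.uIcc_of_le hylr.le
  have hpos : ∀ y ∈ Set.uIcc (yl s) (yr s), (0:ℝ) < y := by
    rw [huIcc]; intro y hy; exact lt_of_lt_of_le hyl hy.1
  unfold Hf
  apply intervalIntegral.integral_eq_sub_of_hasDerivAt
  · intro y hy
    have hy0 := hpos y hy
    have := Real.hasDerivAt_log hy0.ne'
    refine this.congr_deriv ?_
    simp
  · apply (contOn_w_pow s 0).mono (fun y hy => hpos y hy) |>.intervalIntegrable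

/-- closed form for `Hf 1` -/
lemma Hf_one {s : ℝ} (hs : 2 < s) :
    Hf 1 s = s * (Real.log (yr s) - Real.log (yl s)) - 2 * (yr s - yl s) := by
  have hyl := yl_pos hs
  have hylr := yl_lt_yr hs
  have hyr := yr_pos hs
  have huIcc : Set.uIcc (yl s) (yr s) = Set.Icc (yl s) (yr s) := Set.uIcc_of_le hylr.le
  have hpos : ∀ y ∈ Set.uIcc (yl s) (yr s), (0:ℝ) < y := by
    rw [huIcc]; intro y hy; exact lt_of_lt_of_le hyl hy.1
  have key : Hf 1 s = (s * Real.log (yr s) - yr s + (yr s)⁻¹)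
      - (s * Real.log (yl s) - yl s + (yl s)⁻¹) := by
    unfold Hf
    refine intervalIntegral.integral_eq_sub_of_hasDerivAt
      (f := fun y : ℝ => s * Real.log y - y + y⁻¹) ?_ ?_
    · intro y hy
      have hy0 := hpos y hy
      have h1 : HasDerivAt (fun y : ℝ => s * Real.log y - y + y⁻¹)
          (s * y⁻¹ - 1 + (-(y^2)⁻¹)) y := by
        exact (((Real.hasDerivAt_log hy0.ne').const_mul s).sub (hasDerivAt_id y)).add
          (hasDerivAt_inv hy0.ne')
      refine h1.congr_deriv ?_
      have : (y:ℝ) ≠ 0 := hy0.ne'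
      field_simp
      ring
    · exact ((contOn_w_pow s 1).mono (fun y hy => hpos y hy)).intervalIntegrable
  rw [key]
  have hinvr : (yr s)⁻¹ = yl s :=
    inv_eq_of_mul_eq_one_right (by linear_combination yl_mul_yr hs)
  have hinvl : (yl s)⁻¹ = yr s :=
    inv_eq_of_mul_eq_one_right (yl_mul_yr hs)
  rw [hinvr, hinvl]; ring

lemma hasDerivAt_yr {s : ℝ} (hs : 2 < s) :
    HasDerivAt yr (yr s / Real.sqrt (s^2-4)) s := by
  have hd := dd_pos hs
  have h1 : HasDerivAt (fun x : ℝ => x^2 - 4) (2*s) s := by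
    simpa using ((hasDerivAt_pow 2 s).sub_const 4)
  have h2 : HasDerivAt (fun x : ℝ => Real.sqrt (x^2-4)) (2*s / (2 * Real.sqrt (s^2-4))) s :=
    (Real.hasDerivAt_sqrt (by nlinarith [dd_sq hs] : s^2 - 4 ≠ 0)).comp s h1 |>.congr_deriv
      (by ring)
  have h3 : HasDerivAt (fun x : ℝ => (x + Real.sqrt (x^2-4))/2)
      ((1 + 2*s / (2 * Real.sqrt (s^2-4)))/2) s := ((hasDerivAt_id s).add h2).div_const 2
  refine h3.congr_deriv ?_
  have hd2 := dd_sq hs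
  unfold yr
  field_simp
  nlinarith

lemma hasDerivAt_yl {s : ℝ} (hs : 2 < s) :
    HasDerivAt yl (-(yl s) / Real.sqrt (s^2-4)) s := by
  have hd := dd_pos hs
  have h1 : HasDerivAt (fun x : ℝ => x^2 - 4) (2*s) s := by
    simpa using ((hasDerivAt_pow 2 s).sub_const 4)
  have h2 : HasDerivAt (fun x : ℝ => Real.sqrt (x^2-4)) (2*s / (2 * Real.sqrt (s^2-4))) s :=
    (Real.hasDerivAt_sqrt (by nlinarith [dd_sq hs] : s^2 - 4 ≠ 0)).comp s h1 |>.congr_deriv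
      (by ring)
  have h3 : HasDerivAt (fun x : ℝ => (x - Real.sqrt (x^2-4))/2)
      ((1 - 2*s / (2 * Real.sqrt (s^2-4)))/2) s := ((hasDerivAt_id s).sub h2).div_const 2
  refine h3.congr_deriv ?_
  have hd2 := dd_sq hs
  unfold yl
  field_simp
  nlinarith

/-- derivative of `Hf 1` -/
lemma hasDerivAt_Hf_one {s : ℝ} (hs : 2 < s) : HasDerivAt (Hf 1) (Hf 0 s) s := by
  have hyl := yl_pos hs
  have hyr := yr_pos hs
  have hd := dd_pos hs
  have hd' : Real.sqrt (s^2-4) ≠ 0 := hd.ne'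
  have h1 : HasDerivAt (fun x : ℝ => x * (Real.log (yr x) - Real.log (yl x)) - 2 * (yr x - yl x))
      ((Real.log (yr s) - Real.log (yl s)) +
        s * (1 / Real.sqrt (s^2-4) - (-(1 / Real.sqrt (s^2-4)))) -
        2 * (yr s / Real.sqrt (s^2-4) - (-(yl s)/Real.sqrt (s^2-4)))) s := by
    have hlogr : HasDerivAt (fun x : ℝ => Real.log (yr x)) (1 / Real.sqrt (s^2-4)) s := by
      have := (Real.hasDerivAt_log hyr.ne').comp s (hasDerivAt_yr hs)
      refine this.congr_deriv ?_
      field_simp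
    have hlogl : HasDerivAt (fun x : ℝ => Real.log (yl x)) (-(1 / Real.sqrt (s^2-4))) s := by
      have := (Real.hasDerivAt_log hyl.ne').comp s (hasDerivAt_yl hs)
      refine this.congr_deriv ?_
      field_simp
    exact ((hasDerivAt_id s).mul (hlogr.sub hlogl)).sub
      (((hasDerivAt_yr hs).sub (hasDerivAt_yl hs)).const_mul 2) |>.congr_deriv
      (by simp only [id_eq, Pi.sub_apply]; ring)
  have h2 : HasDerivAt (fun x : ℝ => x * (Real.log (yr x) - Real.log (yl x)) - 2 * (yr x - yl x))
      (Hf 0 s) s := by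
    refine h1.congr_deriv ?_
    rw [Hf_zero hs]
    have h3 : s - yr s - yl s = 0 := by linarith [yl_add_yr s]
    field_simp
    linear_combination (2:ℝ) * h3
  refine h2.congr_of_eventuallyEq ?_
  filter_upwards [eventually_gt_nhds hs] with x hx
  exact Hf_one hx

/-- `Hf j` as a fixed-endpoint integral of the positive part. -/
lemma Hf_eq_max {j : ℕ} (hj : 1 ≤ j) {s a b : ℝ} (hs : 2 < s) (ha : 0 < a)
    (h1 : a < yl s) (h2 : yr s < b) :
    (∫ y in a..b, max (s - y - y⁻¹) 0 ^ j / ((j.factorial : ℝ) * y)) = Hf j s := by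
  have hyl := yl_pos hs
  have hylr := yl_lt_yr hs
  have hyr := yr_pos hs
  set F := fun y : ℝ => max (s - y - y⁻¹) 0 ^ j / ((j.factorial : ℝ) * y) with hF
  have hInt : ∀ c d : ℝ, a ≤ c → c ≤ d → d ≤ b → IntervalIntegrable F MeasureTheory.volume c d := by
    intro c d hc hcd hdb
    apply ((contOn_max_pow s j).mono ?_).intervalIntegrable
    rw [Set.uIcc_of_le hcd]
    intro y hy
    exact lt_of_lt_of_le ha (le_trans hc hy.1)
  have key1 : (∫ y in a..yl s, F y) = 0 := by
    rw [← intervalIntegral.integral_zero (a := a) (b := yl s) (μ := MeasureTheory.volume)]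
    apply intervalIntegral.integral_congr
    intro y hy
    rw [Set.uIcc_of_le h1.le] at hy
    have hy0 : 0 < y := lt_of_lt_of_le ha hy.1
    have : max (s - y - y⁻¹) 0 = 0 := max_eq_right (w_nonpos_left hs hy0 hy.2)
    simp [hF, this, zero_pow (by omega : j ≠ 0)]
  have key3 : (∫ y in yr s..b, F y) = 0 := by
    rw [← intervalIntegral.integral_zero (a := yr s) (b := b) (μ := MeasureTheory.volume)]
    apply intervalIntegral.integral_congr
    intro y hy
    rw [Set.uIcc_of_le h2.le] at hy
    have : max (s - y - y⁻¹) 0 = 0 := max_eq_right (w_nonpos_right hs hy.1)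
    simp [hF, this, zero_pow (by omega : j ≠ 0)]
  have key2 : (∫ y in yl s..yr s, F y) = Hf j s := by
    unfold Hf
    apply intervalIntegral.integral_congr
    intro y hy
    rw [Set.uIcc_of_le hylr.le] at hy
    have : max (s - y - y⁻¹) 0 = s - y - y⁻¹ := max_eq_left (w_nonneg hs hy.1 hy.2)
    simp [hF, this]
  have split1 : (∫ y in a..yl s, F y) + (∫ y in yl s..b, F y) = ∫ y in a..b, F y :=
    intervalIntegral.integral_add_adjacent_intervals
      (hInt a (yl s) le_rfl h1.le (by linarith))
      (hInt (yl s) b h1.le (by linarith) le_rfl)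
  have split2 : (∫ y in yl s..yr s, F y) + (∫ y in yr s..b, F y) = ∫ y in yl s..b, F y :=
    intervalIntegral.integral_add_adjacent_intervals
      (hInt (yl s) (yr s) h1.le hylr.le h2.le)
      (hInt (yr s) b (by linarith) h2.le le_rfl)
  rw [← split1, ← split2, key1, key3, key2]
  ring

lemma hasDerivAt_F (m : ℕ) {y : ℝ} (hy : 0 < y) (s : ℝ) :
    HasDerivAt (fun s : ℝ => max (s - y - y⁻¹) 0 ^ (m+2) / (((m+2).factorial : ℝ) * y))
      (max (s - y - y⁻¹) 0 ^ (m+1) / (((m+1).factorial : ℝ) * y)) s := by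
  have hw : HasDerivAt (fun s : ℝ => s - y - y⁻¹) 1 s := by
    simpa using ((hasDerivAt_id s).sub_const y).sub_const y⁻¹
  have h1 := (hasDerivAt_maxpow m (s - y - y⁻¹)).comp s hw
  have h2 := h1.div_const (((m+2).factorial : ℝ) * y)
  refine h2.congr_deriv ?_
  have hfac : ((m+2).factorial : ℝ) = (m+2) * ((m+1).factorial : ℝ) := by
    rw [Nat.factorial_succ (m+1)]; push_cast; ring
  rw [hfac]
  have hfacne : ((m+1).factorial : ℝ) ≠ 0 := Nat.cast_ne_zero.2 (m+1).factorial_ne_zero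
  field_simp

lemma hasDerivAt_Hf_succ (m : ℕ) {s₀ : ℝ} (hs : 2 < s₀) :
    HasDerivAt (Hf (m+2)) (Hf (m+1) s₀) s₀ := by
  have hyl := yl_pos hs
  have hylr := yl_lt_yr hs
  have hyr := yr_pos hs
  set a := yl s₀ / 2 with ha_def
  set b := yr s₀ + 1 with hb_def
  have ha : 0 < a := by positivity
  have h1 : a < yl s₀ := by rw [ha_def]; linarith
  have h2 : yr s₀ < b := by rw [hb_def]; linarith
  have hab : a < b := by linarith
  -- the open neighbourhood
  have hU : IsOpen {s : ℝ | 2 < s ∧ a < yl s ∧ yr s < b} := by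
    apply IsOpen.and (isOpen_lt continuous_const continuous_id)
    exact IsOpen.and (isOpen_lt continuous_const yl_continuous)
      (isOpen_lt yr_continuous continuous_const)
  have hs₀U : s₀ ∈ {s : ℝ | 2 < s ∧ a < yl s ∧ yr s < b} := ⟨hs, h1, h2⟩
  obtain ⟨ε, hε, hball⟩ := Metric.isOpen_iff.1 hU s₀ hs₀U
  set M : ℝ := |s₀| + ε + b + a⁻¹ with hM_def
  have hM0 : 0 < M := by positivity
  set K : ℝ := M ^ (m+1) / (((m+1).factorial : ℝ) * a) with hK_def
  have hK0 : 0 < K := by positivity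
  set F : ℝ → ℝ → ℝ :=
    fun s y => max (s - y - y⁻¹) 0 ^ (m+2) / (((m+2).factorial : ℝ) * y) with hF_def
  set F' : ℝ → ℝ :=
    fun y => max (s₀ - y - y⁻¹) 0 ^ (m+1) / (((m+1).factorial : ℝ) * y) with hF'_def
  have hIpos : ∀ y ∈ Set.uIoc a b, 0 < y := by
    intro y hy
    rw [Set.uIoc_of_le hab.le] at hy
    exact lt_trans ha hy.1
  have hmeas : ∀ s : ℝ, MeasureTheory.AEStronglyMeasurable (F s)
      (MeasureTheory.volume.restrict (Set.uIoc a b)) := by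
    intro s
    apply ContinuousOn.aestronglyMeasurable _ measurableSet_uIoc
    exact (contOn_max_pow s (m+2)).mono hIpos
  have key := intervalIntegral.hasDerivAt_integral_of_dominated_loc_of_lip
    (F := F) (F' := F') (x₀ := s₀) (bound := fun _ => K) (a := a) (b := b)
    (μ := MeasureTheory.volume) (Metric.ball_mem_nhds s₀ hε)
    (Filter.Eventually.of_forall hmeas)
    (((contOn_max_pow s₀ (m+2)).mono (by
        rw [Set.uIcc_of_le hab.le]; intro y hy; exact lt_of_lt_of_le ha hy.1)).intervalIntegrable)
    (ContinuousOn.aestronglyMeasurable ((contOn_max_pow s₀ (m+1)).mono hIpos) measurableSet_uIoc)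
    ?_ intervalIntegrable_const ?_
  · obtain ⟨-, hder⟩ := key
    have hval : (∫ y in a..b, F' y) = Hf (m+1) s₀ := Hf_eq_max (by omega) hs ha h1 h2
    rw [hval] at hder
    refine hder.congr_of_eventuallyEq ?_
    filter_upwards [hU.mem_nhds hs₀U] with s hsU
    exact (Hf_eq_max (by omega) hsU.1 ha hsU.2.1 hsU.2.2).symm
  · -- Lipschitz bound
    apply Filter.Eventually.of_forall
    intro y hy
    have hy0 : 0 < y := hIpos y hy
    rw [Set.uIoc_of_le hab.le] at hy
    apply Convex.lipschitzOnWith_of_nnnorm_hasDerivWithin_le (convex_ball s₀ ε)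
      (f' := fun s => max (s - y - y⁻¹) 0 ^ (m+1) / (((m+1).factorial : ℝ) * y))
      (fun s _ => (hasDerivAt_F m hy0 s).hasDerivWithinAt)
    intro s hsb
    rw [← NNReal.coe_le_coe, coe_nnnorm, Real.coe_nnabs, Real.norm_eq_abs]
    have hd : |s - s₀| < ε := by simpa [Real.dist_eq] using Metric.mem_ball.1 hsb
    have hsabs : |s| ≤ |s₀| + ε := by
      have := abs_sub_abs_le_abs_sub s s₀
      linarith
    have hyi : y⁻¹ ≤ a⁻¹ := inv_anti₀ ha hy.1.le
    have hyy : (0:ℝ) < y + y⁻¹ := by have := inv_pos.2 hy0; linarith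
    have hw_bound : |s - y - y⁻¹| ≤ M := by
      calc |s - y - y⁻¹| = |s - (y + y⁻¹)| := by ring_nf
        _ ≤ |s| + |y + y⁻¹| := abs_sub _ _
        _ = |s| + (y + y⁻¹) := by rw [abs_of_pos hyy]
        _ ≤ M := by rw [hM_def]; have := hy.2; linarith
    have hmax_bound : max (s - y - y⁻¹) 0 ≤ M :=
      le_trans (max_le (le_abs_self _) (abs_nonneg _)) hw_bound
    have hnum : max (s - y - y⁻¹) 0 ^ (m+1) ≤ M ^ (m+1) :=
      pow_le_pow_left₀ (le_max_right _ _) hmax_bound _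
    have habs : |max (s - y - y⁻¹) 0 ^ (m+1) / (((m+1).factorial : ℝ) * y)|
        = max (s - y - y⁻¹) 0 ^ (m+1) / (((m+1).factorial : ℝ) * y) := by
      apply abs_of_nonneg
      positivity
    rw [habs, abs_of_pos hK0, hK_def]
    apply div_le_div₀ (by positivity) hnum (by positivity)
    have hfp : (0:ℝ) < ((m+1).factorial : ℝ) := by positivity
    nlinarith [hy.1.le, ha]
  · -- differentiability
    apply Filter.Eventually.of_forall
    intro y hy
    exact hasDerivAt_F m (hIpos y hy) s₀

lemma hasDerivAt_Hf (j : ℕ) {s : ℝ} (hs : 2 < s) :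
    HasDerivAt (Hf (j+1)) (Hf j s) s := by
  cases j with
  | zero => exact hasDerivAt_Hf_one hs
  | succ m => exact hasDerivAt_Hf_succ m hs

lemma contOn_Hf (j : ℕ) : ContinuousOn (Hf j) (Set.Ioi 2) := by
  cases j with
  | zero =>
    intro s hs
    have hs2 : (2:ℝ) < s := hs
    have : ContinuousAt (fun x => Real.log (yr x) - Real.log (yl x)) s := by
      apply ContinuousAt.sub
      · exact (Real.continuousAt_log (yr_pos hs2).ne').comp yr_continuous.continuousAt
      · exact (Real.continuousAt_log (yl_pos hs2).ne').comp yl_continuous.continuousAt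
    apply ContinuousWithinAt.congr (this.continuousWithinAt)
    · intro x hx; exact Hf_zero hx
    · exact Hf_zero hs2
  | succ m =>
    intro s hs
    exact ((hasDerivAt_Hf m hs).continuousAt).continuousWithinAt

lemma contDiffOn_Hf (n : ℕ) : ContDiffOn ℝ 2 (Hf (n+2)) (Set.Ioi 2) := by
  have hopen : IsOpen (Set.Ioi (2:ℝ)) := isOpen_Ioi
  have hderiv1 : Set.EqOn (deriv (Hf (n+2))) (Hf (n+1)) (Set.Ioi 2) := fun s hs =>
    (hasDerivAt_Hf (n+1) hs).deriv
  have hderiv2 : Set.EqOn (deriv (Hf (n+1))) (Hf n) (Set.Ioi 2) := fun s hs =>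
    (hasDerivAt_Hf n hs).deriv
  rw [show (2 : WithTop ℕ∞) = 1 + 1 by norm_num, contDiffOn_succ_iff_deriv_of_isOpen hopen]
  refine ⟨fun s hs => ((hasDerivAt_Hf (n+1) hs).differentiableAt).differentiableWithinAt,
    by simp, ?_⟩
  apply ContDiffOn.congr _ hderiv1
  rw [show (1 : WithTop ℕ∞) = 0 + 1 by norm_num, contDiffOn_succ_iff_deriv_of_isOpen hopen]
  refine ⟨fun s hs => ((hasDerivAt_Hf n hs).differentiableAt).differentiableWithinAt,
    by simp, ?_⟩
  apply ContDiffOn.congr _ hderiv2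
  rw [contDiffOn_zero]
  exact contOn_Hf n

lemma ptid (n : ℕ) (B y S : ℝ) (hy : y ≠ 0) (hS : S = B + y + y⁻¹) :
    ((1 - -(y^2)⁻¹) * B^(n+1) + (y - y⁻¹) * (((n:ℝ)+1) * B^n * (-1 - -(y^2)⁻¹)))
        / (((n:ℝ)+1) * (n.factorial : ℝ))
    = (4 - S^2) * (B^n / ((n.factorial : ℝ) * y))
      + (2*(n:ℝ)+3) * S * (B^(n+1) / ((((n:ℝ)+1) * (n.factorial : ℝ)) * y))
      - ((n:ℝ)+2)^2 * (B^(n+2) / ((((n:ℝ)+2) * (((n:ℝ)+1) * (n.factorial : ℝ))) * y)) := by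
  subst hS
  have hfacne : (n.factorial : ℝ) ≠ 0 := Nat.cast_ne_zero.2 n.factorial_ne_zero
  have h1 : ((n:ℝ)+1) ≠ 0 := by positivity
  have h2 : ((n:ℝ)+2) ≠ 0 := by positivity
  field_simp
  ring

/-- the quantum differential equation for the `Hf j`, in ODE form -/
lemma Hf_ode (n : ℕ) {s : ℝ} (hs : 2 < s) :
    (4 - s^2) * Hf n s + (2*(n:ℝ)+3) * s * Hf (n+1) s - ((n:ℝ)+2)^2 * Hf (n+2) s = 0 := by
  have hyl := yl_pos hs
  have hylr := yl_lt_yr hs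
  have hyr := yr_pos hs
  have huIcc : Set.uIcc (yl s) (yr s) = Set.Icc (yl s) (yr s) := Set.uIcc_of_le hylr.le
  have hpos : ∀ y ∈ Set.uIcc (yl s) (yr s), (0:ℝ) < y := by
    rw [huIcc]; intro y hy; exact lt_of_lt_of_le hyl hy.1
  have hsub : Set.uIcc (yl s) (yr s) ⊆ {y : ℝ | 0 < y} := fun y hy => hpos y hy
  -- integrable pieces
  have hi : ∀ j : ℕ, IntervalIntegrable
      (fun y : ℝ => (s - y - y⁻¹)^j / ((j.factorial : ℝ) * y)) MeasureTheory.volume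
      (yl s) (yr s) := fun j => ((contOn_w_pow s j).mono hsub).intervalIntegrable
  -- the exact antiderivative
  set g : ℝ → ℝ := fun y => (y - y⁻¹) * (s - y - y⁻¹)^(n+1) / (((n+1).factorial : ℝ)) with hg
  set Gd : ℝ → ℝ := fun y =>
    (4 - s^2) * ((s - y - y⁻¹)^n / ((n.factorial : ℝ) * y))
    + (2*(n:ℝ)+3) * s * ((s - y - y⁻¹)^(n+1) / (((n+1).factorial : ℝ) * y))
    - ((n:ℝ)+2)^2 * ((s - y - y⁻¹)^(n+2) / (((n+2).factorial : ℝ) * y)) with hGd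
  have hgd : ∀ y ∈ Set.uIcc (yl s) (yr s), HasDerivAt g (Gd y) y := by
    intro y hy
    have hy0 : 0 < y := hpos y hy
    have hyne : y ≠ 0 := hy0.ne'
    have hw : HasDerivAt (fun y : ℝ => s - y - y⁻¹) (-1 - (-(y^2)⁻¹)) y :=
      ((hasDerivAt_const y s).sub (hasDerivAt_id y)).sub (hasDerivAt_inv hyne) |>.congr_deriv
        (by ring)
    have hwp : HasDerivAt (fun y : ℝ => (s - y - y⁻¹)^(n+1))
        ((((n:ℝ)+1) * (s - y - y⁻¹)^n) * (-1 - (-(y^2)⁻¹))) y := by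
      have := (hasDerivAt_pow (n+1) (s - y - y⁻¹)).comp y hw
      refine this.congr_deriv ?_
      push_cast
      ring
    have hfst : HasDerivAt (fun y : ℝ => y - y⁻¹) (1 - (-(y^2)⁻¹)) y :=
      (hasDerivAt_id y).sub (hasDerivAt_inv hyne)
    have hprod := (hfst.mul hwp).div_const (((n+1).factorial : ℝ))
    refine hprod.congr_deriv ?_
    rw [hGd]
    have hf1 : ((n+1).factorial : ℝ) = ((n:ℝ)+1) * (n.factorial : ℝ) := by
      rw [Nat.factorial_succ]; push_cast; ring
    have hf2 : ((n+2).factorial : ℝ) = ((n:ℝ)+2) * (((n:ℝ)+1) * (n.factorial : ℝ)) := by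
      rw [Nat.factorial_succ (n+1), Nat.factorial_succ n]; push_cast; ring
    rw [hf1, hf2]
    linear_combination ptid n (s - y - y⁻¹) y s hyne (by ring)
  have hGdInt : IntervalIntegrable Gd MeasureTheory.volume (yl s) (yr s) := by
    rw [hGd]
    exact (((hi n).const_mul _).add ((hi (n+1)).const_mul _)).sub ((hi (n+2)).const_mul _)
  have hint : (∫ y in yl s..yr s, Gd y) = g (yr s) - g (yl s) :=
    intervalIntegral.integral_eq_sub_of_hasDerivAt hgd hGdInt
  have hzero_r : g (yr s) = 0 := by
    rw [hg]; simp only []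
    rw [w_yr hs, zero_pow (by omega : n+1 ≠ 0)]
    ring
  have hzero_l : g (yl s) = 0 := by
    rw [hg]; simp only []
    rw [w_yl hs, zero_pow (by omega : n+1 ≠ 0)]
    ring
  have hsplit : (∫ y in yl s..yr s, Gd y)
      = (4 - s^2) * Hf n s + (2*(n:ℝ)+3) * s * Hf (n+1) s - ((n:ℝ)+2)^2 * Hf (n+2) s := by
    rw [hGd]
    rw [intervalIntegral.integral_sub (((hi n).const_mul _).add ((hi (n+1)).const_mul _))
      ((hi (n+2)).const_mul _)]
    rw [intervalIntegral.integral_add ((hi n).const_mul _) ((hi (n+1)).const_mul _)]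
    rw [intervalIntegral.integral_const_mul, intervalIntegral.integral_const_mul,
      intervalIntegral.integral_const_mul]
    rfl
  rw [← hsplit, hint, hzero_r, hzero_l]
  ring

lemma sqrtQexp {Q : ℝ} (hQ : 0 < Q) (t : ℝ) :
    Real.sqrt (Q * Real.exp t) = Real.sqrt Q * Real.exp (t/2) := by
  rw [Real.sqrt_mul hQ.le, ← Real.exp_half]

/-- substitution `x = v y` reducing the period integral to `Hf` -/
lemma P_eq_Hf {Q : ℝ} (hQ : 0 < Q) (k : ℕ) {lam t : ℝ}
    (h : 2 * Real.sqrt (Q * Real.exp t) < lam) :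
    (∫ x in ((lam - Real.sqrt (lam ^ 2 - 4 * Q * Real.exp t)) / 2)..
        ((lam + Real.sqrt (lam ^ 2 - 4 * Q * Real.exp t)) / 2),
      (lam - x - Q * Real.exp t / x) ^ k / (Nat.factorial k : ℝ) / x)
    = (Real.sqrt (Q * Real.exp t)) ^ k * Hf k (lam / Real.sqrt (Q * Real.exp t)) := by
  set v : ℝ := Real.sqrt (Q * Real.exp t) with hv_def
  have hQe : 0 < Q * Real.exp t := by positivity
  have hv : 0 < v := Real.sqrt_pos.2 hQe
  have hv2 : v ^ 2 = Q * Real.exp t := Real.sq_sqrt hQe.le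
  set s : ℝ := lam / v with hs_def
  have hlam : lam = s * v := by rw [hs_def]; field_simp
  have hs : 2 < s := by
    rw [hs_def, lt_div_iff₀ hv]; linarith
  have key1 : lam ^ 2 - 4 * Q * Real.exp t = v^2 * (s^2 - 4) := by
    rw [hlam]; linear_combination (4 : ℝ) * hv2
  have key2 : Real.sqrt (lam ^ 2 - 4 * Q * Real.exp t) = v * Real.sqrt (s^2 - 4) := by
    rw [key1, Real.sqrt_mul (sq_nonneg v), Real.sqrt_sq hv.le]
  have hleft : (lam - Real.sqrt (lam ^ 2 - 4 * Q * Real.exp t)) / 2 = v * yl s := by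
    rw [key2, hlam]; unfold yl; ring
  have hright : (lam + Real.sqrt (lam ^ 2 - 4 * Q * Real.exp t)) / 2 = v * yr s := by
    rw [key2, hlam]; unfold yr; ring
  rw [hleft, hright]
  have hcomp := intervalIntegral.integral_comp_mul_left
    (fun x => (lam - x - Q * Real.exp t / x) ^ k / (Nat.factorial k : ℝ) / x)
    (c := v) hv.ne' (a := yl s) (b := yr s)
  have hcomp' : (∫ x in v * yl s..v * yr s,
      (lam - x - Q * Real.exp t / x) ^ k / (Nat.factorial k : ℝ) / x)
      = v * ∫ y in yl s..yr s,
          (lam - v * y - Q * Real.exp t / (v * y)) ^ k / (Nat.factorial k : ℝ) / (v * y) := by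
    rw [hcomp, smul_eq_mul, ← mul_assoc, mul_inv_cancel₀ hv.ne', one_mul]
  rw [hcomp', ← intervalIntegral.integral_const_mul, Hf, ← intervalIntegral.integral_const_mul]
  apply intervalIntegral.integral_congr
  intro y hy
  dsimp only
  rw [Set.uIcc_of_le (yl_lt_yr hs).le] at hy
  have hy0 : 0 < y := lt_of_lt_of_le (yl_pos hs) hy.1
  have harg : lam - v * y - Q * Real.exp t / (v * y) = v * (s - y - y⁻¹) := by
    rw [hlam, show Q * Real.exp t = v^2 from hv2.symm]; field_simp
  rw [harg, mul_pow]
  have hfacne : ((Nat.factorial k) : ℝ) ≠ 0 := Nat.cast_ne_zero.2 k.factorial_ne_zero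
  field_simp

/-- The period integrals
`ℐ_k(λ,t) = ∫_{x₋(λ,t)}^{x₊(λ,t)} (λ - x - Qe^t/x)^k/k! dx/x` (for `k ≥ 2`) of the
mirror superpotential of ℂP¹ are C² on the region `{λ > 2√(Qe^t)}` and satisfy
the small quantum differential equation in the form `∂²_t ℐ_k = Qe^t ∂²_λ ℐ_k`. -/
theorem cp1_period_integral_quantum_pde (Q : ℝ) (hQ : 0 < Q) (k : ℕ) (hk : 2 ≤ k) :
    let P : ℝ → ℝ → ℝ := fun lam t =>
      ∫ x in ((lam - Real.sqrt (lam ^ 2 - 4 * Q * Real.exp t)) / 2)..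
          ((lam + Real.sqrt (lam ^ 2 - 4 * Q * Real.exp t)) / 2),
        (lam - x - Q * Real.exp t / x) ^ k / (Nat.factorial k : ℝ) / x
    ContDiffOn ℝ 2 (fun p : ℝ × ℝ => P p.1 p.2)
      {p : ℝ × ℝ | 2 * Real.sqrt (Q * Real.exp p.2) < p.1} ∧
    (∀ lam t : ℝ, 2 * Real.sqrt (Q * Real.exp t) < lam →
      deriv (deriv (fun t' => P lam t')) t
        = Q * Real.exp t * deriv (deriv (fun l => P l t)) lam) := by
  obtain ⟨n, rfl⟩ : ∃ n, k = n + 2 := ⟨k - 2, by omega⟩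
  intro P
  set ve : ℝ → ℝ := fun z => Real.sqrt Q * Real.exp (z/2) with hve_def
  have hve_pos : ∀ z, 0 < ve z := fun z => by
    have := Real.sqrt_pos.2 hQ
    positivity
  have hve2 : ∀ z, ve z ^ 2 = Q * Real.exp z := by
    intro z
    rw [hve_def]
    simp only []
    rw [mul_pow, Real.sq_sqrt hQ.le, sq, ← Real.exp_add, add_halves]
  have hsq : ∀ z, Real.sqrt (Q * Real.exp z) = ve z := fun z => sqrtQexp hQ z
  have hiff : ∀ z lam : ℝ, 2 * Real.sqrt (Q * Real.exp z) < lam ↔ 2 < lam / ve z := by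
    intro z lam
    rw [hsq z, lt_div_iff₀ (hve_pos z), mul_comm]
  have hP : ∀ lam t : ℝ, 2 * Real.sqrt (Q * Real.exp t) < lam →
      P lam t = (ve t) ^ (n+2) * Hf (n+2) (lam / ve t) := by
    intro lam t h
    exact (P_eq_Hf hQ (n+2) h).trans (by rw [hsq t])
  have hve' : ∀ z, HasDerivAt ve (ve z / 2) z := by
    intro z
    have h1 : HasDerivAt (fun w : ℝ => w/2) (1/2 : ℝ) z := (hasDerivAt_id z).div_const 2
    have h2 := (Real.hasDerivAt_exp (z/2)).comp z h1
    have h3 := h2.const_mul (Real.sqrt Q)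
    refine h3.congr_deriv ?_
    rw [hve_def]; ring
  have hσ' : ∀ (lam z : ℝ), HasDerivAt (fun w => lam / ve w) (-(lam / ve z)/2) z := by
    intro lam z
    have h1 := ((hve' z).inv (hve_pos z).ne').const_mul lam
    have h2 : (fun w => lam * (ve w)⁻¹) = fun w => lam / ve w := by
      funext w; rw [div_eq_mul_inv]
    simp only [Pi.inv_apply] at h1
    rw [h2] at h1
    refine h1.congr_deriv ?_
    have := (hve_pos z).ne'
    field_simp
  have hUopen : ∀ lam : ℝ, IsOpen {z : ℝ | 2 * Real.sqrt (Q * Real.exp z) < lam} := by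
    intro lam
    apply isOpen_lt _ continuous_const
    exact Continuous.mul continuous_const (Real.continuous_sqrt.comp (continuous_const.mul Real.continuous_exp))
  -- first derivative in t, valid on the open region
  have hstep1 : ∀ lam t' : ℝ, 2 * Real.sqrt (Q * Real.exp t') < lam →
      HasDerivAt (fun z => P lam z)
        ((ve t')^(n+2) * (((n:ℝ)+2)/2 * Hf (n+2) (lam / ve t')
          - (lam / ve t')/2 * Hf (n+1) (lam / ve t'))) t' := by
    intro lam t' h
    have hσ2 : 2 < lam / ve t' := (hiff t' lam).1 h
    have hA : HasDerivAt (fun z => (ve z)^(n+2))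
        ((((n:ℝ)+2) * (ve t')^(n+1)) * (ve t'/2)) t' := by
      have := (hve' t').pow (n+2)
      refine this.congr_deriv ?_
      push_cast
      norm_num
    have hB : HasDerivAt (fun z => Hf (n+2) (lam / ve z))
        (Hf (n+1) (lam / ve t') * (-(lam / ve t')/2)) t' :=
      (hasDerivAt_Hf (n+1) hσ2).comp (h₂ := Hf (n+2)) t' (hσ' lam t')
    have hAB := hA.mul hB
    have hAB' := hAB.congr_deriv (show _ = (ve t')^(n+2) * (((n:ℝ)+2)/2 * Hf (n+2) (lam / ve t')
          - (lam / ve t')/2 * Hf (n+1) (lam / ve t')) by ring)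
    refine hAB'.congr_of_eventuallyEq ?_
    filter_upwards [(hUopen lam).mem_nhds h] with z hz
    exact hP lam z hz
  refine ⟨?_, ?_⟩
  · -- C² smoothness
    have hcont1 : ContDiff ℝ 2 ve := by
      apply ContDiff.mul contDiff_const
      exact Real.contDiff_exp.comp (contDiff_id.div_const 2)
    have hg : ContDiff ℝ 2 (fun p : ℝ × ℝ => p.1 / ve p.2) :=
      ContDiff.div contDiff_fst (hcont1.comp contDiff_snd) (fun p => (hve_pos p.2).ne')
    have hpow : ContDiff ℝ 2 (fun p : ℝ × ℝ => (ve p.2)^(n+2)) :=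
      (hcont1.comp contDiff_snd).pow _
    have hHfcomp : ContDiffOn ℝ 2 (fun p : ℝ × ℝ => Hf (n+2) (p.1 / ve p.2))
        {p : ℝ × ℝ | 2 * Real.sqrt (Q * Real.exp p.2) < p.1} := by
      apply (contDiffOn_Hf n).comp hg.contDiffOn
      intro p hp
      exact (hiff p.2 p.1).1 hp
    have hG := (hpow.contDiffOn).mul hHfcomp
    apply hG.congr
    intro p hp
    exact hP p.1 p.2 hp
  · -- the PDE
    intro lam t h
    set s0 : ℝ := lam / ve t with hs0_def
    have hs0 : 2 < s0 := (hiff t lam).1 h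
    -- second derivative in t
    set E : ℝ → ℝ := fun z => (ve z)^(n+2) * (((n:ℝ)+2)/2 * Hf (n+2) (lam / ve z)
      - (lam / ve z)/2 * Hf (n+1) (lam / ve z)) with hE_def
    have hdt1 : deriv (deriv (fun t' => P lam t')) t = deriv E t := by
      apply Filter.EventuallyEq.deriv_eq
      filter_upwards [(hUopen lam).mem_nhds h] with z hz
      exact (hstep1 lam z hz).deriv
    have hE' : HasDerivAt E ((ve t)^(n+2) * (((n:ℝ)+2)^2/4 * Hf (n+2) s0
        - (2*(n:ℝ)+3)*s0/4 * Hf (n+1) s0 + s0^2/4 * Hf n s0)) t := by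
      have hA : HasDerivAt (fun z => (ve z)^(n+2))
          ((((n:ℝ)+2) * (ve t)^(n+1)) * (ve t/2)) t := by
        have := (hve' t).pow (n+2)
        refine this.congr_deriv ?_
        push_cast
        norm_num
      have hC := hσ' lam t
      have hB1 : HasDerivAt (fun z => Hf (n+2) (lam / ve z)) (Hf (n+1) s0 * (-(s0)/2)) t :=
        (hasDerivAt_Hf (n+1) hs0).comp (h₂ := Hf (n+2)) t hC
      have hB2 : HasDerivAt (fun z => Hf (n+1) (lam / ve z)) (Hf n s0 * (-(s0)/2)) t :=
        (hasDerivAt_Hf n hs0).comp (h₂ := Hf (n+1)) t hC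
      have hinner := (hB1.const_mul (((n:ℝ)+2)/2)).sub ((hC.div_const 2).mul hB2)
      have htot := hA.mul hinner
      refine htot.congr_deriv ?_
      simp only [Pi.sub_apply, Pi.mul_apply]
      ring
    have hdt : deriv (deriv (fun t' => P lam t')) t = (ve t)^(n+2) * (((n:ℝ)+2)^2/4 * Hf (n+2) s0
        - (2*(n:ℝ)+3)*s0/4 * Hf (n+1) s0 + s0^2/4 * Hf n s0) := by
      rw [hdt1, hE'.deriv]
    -- second derivative in lam
    have hstepl : ∀ l : ℝ, 2 * Real.sqrt (Q * Real.exp t) < l →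
        HasDerivAt (fun x => P x t) ((ve t)^(n+1) * Hf (n+1) (l / ve t)) l := by
      intro l hl
      have hl2 : 2 < l / ve t := (hiff t l).1 hl
      have hlin : HasDerivAt (fun x : ℝ => x / ve t) (1 / ve t) l := by
        simpa using (hasDerivAt_id l).div_const (ve t)
      have hin : HasDerivAt (fun x => Hf (n+2) (x / ve t)) (Hf (n+1) (l / ve t) * (1 / ve t)) l :=
        (hasDerivAt_Hf (n+1) hl2).comp (h₂ := Hf (n+2)) l hlin
      have htot := hin.const_mul ((ve t)^(n+2))
      have htot' := htot.congr_deriv (show (ve t)^(n+2) * (Hf (n+1) (l / ve t) * (1 / ve t))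
          = (ve t)^(n+1) * Hf (n+1) (l / ve t) by
        have := (hve_pos t).ne'
        field_simp
        ring)
      refine htot'.congr_of_eventuallyEq ?_
      have hop : IsOpen {x : ℝ | 2 * Real.sqrt (Q * Real.exp t) < x} :=
        isOpen_lt continuous_const continuous_id
      filter_upwards [hop.mem_nhds hl] with x hx
      exact hP x t hx
    have hdl1 : deriv (deriv (fun l => P l t)) lam
        = deriv (fun x => (ve t)^(n+1) * Hf (n+1) (x / ve t)) lam := by
      apply Filter.EventuallyEq.deriv_eq
      have hop : IsOpen {x : ℝ | 2 * Real.sqrt (Q * Real.exp t) < x} :=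
        isOpen_lt continuous_const continuous_id
      filter_upwards [hop.mem_nhds h] with x hx
      exact (hstepl x hx).deriv
    have hE2' : HasDerivAt (fun x => (ve t)^(n+1) * Hf (n+1) (x / ve t))
        ((ve t)^n * Hf n s0) lam := by
      have hlin : HasDerivAt (fun x : ℝ => x / ve t) (1 / ve t) lam := by
        simpa using (hasDerivAt_id lam).div_const (ve t)
      have hin : HasDerivAt (fun x => Hf (n+1) (x / ve t)) (Hf n s0 * (1 / ve t)) lam :=
        (hasDerivAt_Hf n hs0).comp (h₂ := Hf (n+1)) lam hlin
      have htot := hin.const_mul ((ve t)^(n+1))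
      refine htot.congr_deriv ?_
      have := (hve_pos t).ne'
      field_simp
      ring
    have hdl : deriv (deriv (fun l => P l t)) lam = (ve t)^n * Hf n s0 := by
      rw [hdl1, hE2'.deriv]
    rw [hdt, hdl]
    have hQe : Q * Real.exp t = (ve t)^2 := (hve2 t).symm
    rw [hQe]
    have hode := Hf_ode n hs0
    have hpowsplit : (ve t)^(n+2) = (ve t)^2 * (ve t)^n := by ring
    rw [hpowsplit]
    linear_combination (-(ve t)^2 * (ve t)^n / 4) * hode
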